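/- (Lower bound, Many-to-Many, maximum error.) Let K ≥ 2, let X be a countable type, and for each pair i, k ∈ {0,…,K−1} let D_{i,k} be a probability distribution (PMF) on X (the marginal of the parallel corpus for translating language i to language k over source sentences) and f_{i,k} : X → Y a ground-truth translator into a countable type Y. Let Z be a measurable space and g : X → Z satisfy, for every k and every i ≠ j, d_TV(g♯D_{i,k}, g♯D_{j,k}) ≤ ε. Then for every measurable decoder h : Z → Y, max_{i,k} Pr_{X∼D_{i,k}}(h(g(X)) ≠ f_{i,k}(X)) ≥ (1/2)·max_{k} max_{i≠j} d_TV(f_{i,k}♯D_{i,k}, f_{j,k}♯D_{j,k}) − ε/2. -/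
import Mathlib


open MeasureTheory ENNReal

/-- Total variation distance between two measures: supremum over measurable events of
the absolute difference of the probabilities. -/
noncomputable def tvDist {α : Type*} [MeasurableSpace α] (P Q : Measure α) : ℝ :=
  ⨆ E : {s : Set α // MeasurableSet s}, |(P E.1).toReal - (Q E.1).toReal|

lemma prob_toReal_le_one {α : Type*} [MeasurableSpace α] (P : Measure α)
    [IsProbabilityMeasure P] (s : Set α) : (P s).toReal ≤ 1 := by
  have := prob_le_one (μ := P) (s := s)
  calc (P s).toReal ≤ (1 : ℝ≥0∞).toReal := ENNReal.toReal_mono ENNReal.one_ne_top this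
    _ = 1 := by simp

lemma abs_prob_sub_le_one {α : Type*} [MeasurableSpace α] (P Q : Measure α)
    [IsProbabilityMeasure P] [IsProbabilityMeasure Q] (s : Set α) :
    |(P s).toReal - (Q s).toReal| ≤ 1 := by
  have h1 := prob_toReal_le_one P s
  have h2 := prob_toReal_le_one Q s
  have h3 : 0 ≤ (P s).toReal := ENNReal.toReal_nonneg
  have h4 : 0 ≤ (Q s).toReal := ENNReal.toReal_nonneg
  rw [abs_sub_le_iff]; constructor <;> linarith

lemma tvDist_bddAbove {α : Type*} [MeasurableSpace α] (P Q : Measure α)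
    [IsProbabilityMeasure P] [IsProbabilityMeasure Q] :
    BddAbove (Set.range fun E : {s : Set α // MeasurableSet s} =>
      |(P E.1).toReal - (Q E.1).toReal|) := by
  refine ⟨1, ?_⟩
  rintro x ⟨E, rfl⟩
  exact abs_prob_sub_le_one P Q E.1

lemma le_tvDist {α : Type*} [MeasurableSpace α] (P Q : Measure α)
    [IsProbabilityMeasure P] [IsProbabilityMeasure Q]
    {s : Set α} (hs : MeasurableSet s) :
    |(P s).toReal - (Q s).toReal| ≤ tvDist P Q :=
  le_ciSup (tvDist_bddAbove P Q) ⟨s, hs⟩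

/-- Probabilities of events under two pushforwards differ by at most the probability
that the two maps disagree. -/
lemma map_err {X Y : Type*} [MeasurableSpace X] [MeasurableSpace Y]
    (p : PMF X) (u v : X → Y) (hu : Measurable u) (hv : Measurable v)
    (hS : MeasurableSet {x | u x ≠ v x})
    {E : Set Y} (hE : MeasurableSet E) :
    |((p.map u).toMeasure E).toReal - ((p.map v).toMeasure E).toReal|
      ≤ (p.toMeasure {x | u x ≠ v x}).toReal := by
  rw [PMF.toMeasure_map_apply _ _ _ hu hE, PMF.toMeasure_map_apply _ _ _ hv hE]
  set Dm := p.toMeasure with hDm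
  have hfin : ∀ s : Set X, Dm s ≠ ⊤ := fun s => measure_ne_top _ s
  have key : ∀ (A B : Set X), A ⊆ B ∪ {x | u x ≠ v x} →
      (Dm A).toReal ≤ (Dm B).toReal + (Dm {x | u x ≠ v x}).toReal := by
    intro A B hAB
    have h1 : Dm A ≤ Dm B + Dm {x | u x ≠ v x} :=
      (measure_mono hAB).trans (measure_union_le _ _)
    have := ENNReal.toReal_mono (by simp [ENNReal.add_ne_top, hfin]) h1
    rwa [ENNReal.toReal_add (hfin _) (hfin _)] at this
  have hsub1 : u ⁻¹' E ⊆ v ⁻¹' E ∪ {x | u x ≠ v x} := by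
    intro x hx
    by_cases hxy : u x = v x
    · left; simpa [Set.mem_preimage, ← hxy] using hx
    · right; exact hxy
  have hsub2 : v ⁻¹' E ⊆ u ⁻¹' E ∪ {x | u x ≠ v x} := by
    intro x hx
    by_cases hxy : u x = v x
    · left; simpa [Set.mem_preimage, hxy] using hx
    · right; exact hxy
  rw [abs_sub_le_iff]
  exact ⟨by linarith [key _ _ hsub1], by linarith [key _ _ hsub2]⟩

/-- Lower bound, Many-to-Many, maximum error. Here `D i k` is the marginal over source
sentences of the parallel corpus for translating language `i` into language `k`, and
`f i k` is the corresponding ground-truth translator. If `g` is an `ε`-universal language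
mapping (pushforwards of `D i k` and `D j k` under `g` are within `ε` for every target
`k` and sources `i ≠ j`), then for any measurable decoder `h`, the maximum translation
error is at least half the maximum (over targets `k` and sources `i ≠ j`) of the total
variation distance of the target marginals, minus `ε / 2`. -/
theorem many_to_many_max_lower_bound {X Y Z : Type*}
    [Countable X] [MeasurableSpace X] [DiscreteMeasurableSpace X]
    [Countable Y] [MeasurableSpace Y] [DiscreteMeasurableSpace Y]
    [MeasurableSpace Z]
    (K : ℕ) (hK : 2 ≤ K)
    (D : Fin K → Fin K → PMF X) (f : Fin K → Fin K → X → Y) (g : X → Z) (ε : ℝ)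
    (hg : ∀ k i j, i ≠ j →
      tvDist ((D i k).map g).toMeasure ((D j k).map g).toMeasure ≤ ε)
    {h : Z → Y} (hh : Measurable h) :
    (⨆ p : Fin K × Fin K,
        ((D p.1 p.2).toMeasure {x | h (g x) ≠ f p.1 p.2 x}).toReal)
      ≥ (1 / 2) * (⨆ q : {q : Fin K × Fin K × Fin K // q.2.1 ≠ q.2.2},
          tvDist ((D q.1.2.1 q.1.1).map (f q.1.2.1 q.1.1)).toMeasure
            ((D q.1.2.2 q.1.1).map (f q.1.2.2 q.1.1)).toMeasure) - ε / 2 := by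
  classical
  set Err : Fin K × Fin K → ℝ :=
    fun p => ((D p.1 p.2).toMeasure {x | h (g x) ≠ f p.1 p.2 x}).toReal with hErr
  set M := ⨆ p : Fin K × Fin K, Err p with hM
  have hErrBdd : BddAbove (Set.range Err) := by
    refine ⟨1, ?_⟩
    rintro x ⟨p, rfl⟩
    exact prob_toReal_le_one _ _
  have hErr_le_M : ∀ p, Err p ≤ M := fun p => le_ciSup hErrBdd p
  set S := ⨆ q : {q : Fin K × Fin K × Fin K // q.2.1 ≠ q.2.2},
      tvDist ((D q.1.2.1 q.1.1).map (f q.1.2.1 q.1.1)).toMeasure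
        ((D q.1.2.2 q.1.1).map (f q.1.2.2 q.1.1)).toMeasure with hS
  haveI : Nonempty {q : Fin K × Fin K × Fin K // q.2.1 ≠ q.2.2} :=
    ⟨⟨(⟨0, by omega⟩, ⟨0, by omega⟩, ⟨1, by omega⟩), by simp [Fin.ext_iff]⟩⟩
  have hSle : S ≤ 2 * M + ε := by
    rw [hS]
    apply ciSup_le
    rintro ⟨⟨k, i, j⟩, hij⟩
    simp only
    unfold tvDist
    haveI : Nonempty {s : Set Y // MeasurableSet s} := ⟨⟨∅, MeasurableSet.empty⟩⟩
    apply ciSup_le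
    rintro ⟨E, hE⟩
    simp only
    have hfm : ∀ (i k : Fin K), Measurable (f i k) := fun i k => .of_discrete
    have hgm : Measurable g := .of_discrete
    have hhg : Measurable (h ∘ g) := hh.comp hgm
    -- first leg
    have leg1 : |(((D i k).map (f i k)).toMeasure E).toReal -
        (((D i k).map (h ∘ g)).toMeasure E).toReal| ≤ Err (i, k) := by
      have := map_err (D i k) (f i k) (h ∘ g) (hfm i k) hhg .of_discrete hE
      have hset : {x | f i k x ≠ (h ∘ g) x} = {x | h (g x) ≠ f i k x} := by
        ext x; exact ne_comm
      rw [hset] at this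
      exact this
    -- third leg
    have leg3 : |(((D j k).map (h ∘ g)).toMeasure E).toReal -
        (((D j k).map (f j k)).toMeasure E).toReal| ≤ Err (j, k) := by
      have := map_err (D j k) (h ∘ g) (f j k) hhg (hfm j k) .of_discrete hE
      have hset : {x | (h ∘ g) x ≠ f j k x} = {x | h (g x) ≠ f j k x} := rfl
      rw [hset] at this
      exact this
    -- middle leg
    have leg2 : |(((D i k).map (h ∘ g)).toMeasure E).toReal -
        (((D j k).map (h ∘ g)).toMeasure E).toReal| ≤ ε := by
      have hcomp : ∀ i : Fin K, (D i k).map (h ∘ g) = ((D i k).map g).map h := by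
        intro i; rw [PMF.map_comp]
      rw [hcomp i, hcomp j,
        PMF.toMeasure_map_apply _ _ _ hh hE, PMF.toMeasure_map_apply _ _ _ hh hE]
      exact (le_tvDist _ _ (hh hE)).trans (hg k i j hij)
    calc |(((D i k).map (f i k)).toMeasure E).toReal -
          (((D j k).map (f j k)).toMeasure E).toReal|
        ≤ |(((D i k).map (f i k)).toMeasure E).toReal -
            (((D i k).map (h ∘ g)).toMeasure E).toReal| +
          |(((D i k).map (h ∘ g)).toMeasure E).toReal -
            (((D j k).map (h ∘ g)).toMeasure E).toReal| +
          |(((D j k).map (h ∘ g)).toMeasure E).toReal -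
            (((D j k).map (f j k)).toMeasure E).toReal| := by
          have t1 := abs_sub_le (((D i k).map (f i k)).toMeasure E).toReal
            (((D i k).map (h ∘ g)).toMeasure E).toReal
            (((D j k).map (f j k)).toMeasure E).toReal
          have t2 := abs_sub_le (((D i k).map (h ∘ g)).toMeasure E).toReal
            (((D j k).map (h ∘ g)).toMeasure E).toReal
            (((D j k).map (f j k)).toMeasure E).toReal
          linarith
      _ ≤ Err (i, k) + ε + Err (j, k) := by linarith
      _ ≤ 2 * M + ε := by linarith [hErr_le_M (i, k), hErr_le_M (j, k)]
  linarith
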